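/- For every positive integer s, \frac{-1}{(2s)!\,2!} + \frac{1}{(2s+1)!\,1!} + \frac{2\big((2s+1)(2s+2)-1\big)}{(2s+2)!} = \sum_{i=1}^{2s-1} \frac{(-1)^{1+i}\big((2s-i)^2 + 3(2s-i) + 1\big)}{i!\,(2s+2-i)!}. -/

import Mathlib

noncomputable def Ftel (s i : ℕ) : ℚ :=
  (-1) ^ i *
    (-(2 * (s:ℚ) + 2) * (i:ℚ) ^ 3 + (2 * (s:ℚ) + 2) * (4 * (s:ℚ) + 3) * (i:ℚ) ^ 2 -
        ((2 * (s:ℚ)) ^ 3 + 5 * (2 * (s:ℚ)) ^ 2 + 7 * (2 * (s:ℚ)) + 4) * (i:ℚ)) /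
    ((2 * (s:ℚ)) * (2 * (s:ℚ) + 2) * (Nat.factorial i : ℚ) * (Nat.factorial (2 * s + 2 - i) : ℚ))

lemma step (s i : ℕ) (hs : 0 < s) (h1 : 1 ≤ i) (h2 : i ≤ 2 * s - 1) :
    ((-1 : ℚ) ^ (1 + i)) * (((2 * s - i : ℕ) : ℚ) ^ 2 + 3 * ((2 * s - i : ℕ) : ℚ) + 1) /
      ((Nat.factorial i : ℚ) * (Nat.factorial (2 * s + 2 - i) : ℚ)) =
    Ftel s i - Ftel s (i + 1) := by
  have hi : i ≤ 2 * s := by omega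
  have e1 : 2 * s + 2 - i = (2 * s + 1 - i) + 1 := by omega
  have e2 : 2 * s + 2 - (i + 1) = 2 * s + 1 - i := by omega
  have hc1 : ((2 * s - i : ℕ) : ℚ) = 2 * (s:ℚ) - (i:ℚ) := by
    push_cast [Nat.cast_sub hi]; ring
  unfold Ftel
  rw [e1, e2, Nat.factorial_succ (2 * s + 1 - i), Nat.factorial_succ i]
  have hc2 : ((2 * s + 1 - i : ℕ) : ℚ) = 2 * (s:ℚ) + 1 - (i:ℚ) := by
    have : i ≤ 2 * s + 1 := by omega
    push_cast [Nat.cast_sub this]; ring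
  rw [hc1]
  push_cast [hc2]
  have hfi : (Nat.factorial i : ℚ) ≠ 0 := by positivity
  have hf2 : (Nat.factorial (2 * s + 1 - i) : ℚ) ≠ 0 := by positivity
  have hs' : (2 * (s:ℚ)) ≠ 0 := by positivity
  have hs2 : (2 * (s:ℚ) + 2) ≠ 0 := by positivity
  have hip : ((i:ℚ) + 1) ≠ 0 := by positivity
  have hnum : (2 * (s:ℚ) + 1 - (i:ℚ)) + 1 ≠ 0 := by
    have : (i:ℚ) ≤ 2 * (s:ℚ) := by exact_mod_cast hi
    nlinarith
  rw [pow_add, pow_succ]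
  field_simp
  ring

theorem three_term_eq_alternating_sum (s : ℕ) (hs : 0 < s) :
    (-1) / ((Nat.factorial (2 * s) : ℚ) * (Nat.factorial 2 : ℚ)) +
        1 / ((Nat.factorial (2 * s + 1) : ℚ) * (Nat.factorial 1 : ℚ)) +
        2 * (((2 * s + 1 : ℚ)) * ((2 * s + 2 : ℚ)) - 1) /
          (Nat.factorial (2 * s + 2) : ℚ) =
      ∑ i ∈ Finset.Icc 1 (2 * s - 1),
        ((-1 : ℚ) ^ (1 + i)) * (((2 * s - i : ℕ) : ℚ) ^ 2 + 3 * ((2 * s - i : ℕ) : ℚ) + 1) /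
          ((Nat.factorial i : ℚ) * (Nat.factorial (2 * s + 2 - i) : ℚ)) := by
  have hsum : (∑ i ∈ Finset.Icc 1 (2 * s - 1),
        ((-1 : ℚ) ^ (1 + i)) * (((2 * s - i : ℕ) : ℚ) ^ 2 + 3 * ((2 * s - i : ℕ) : ℚ) + 1) /
          ((Nat.factorial i : ℚ) * (Nat.factorial (2 * s + 2 - i) : ℚ))) =
      Ftel s 1 - Ftel s (2 * s) := by
    rw [Finset.sum_congr rfl (fun i hi => by
      simp only [Finset.mem_Icc] at hi
      exact step s i hs hi.1 hi.2)]
    rw [← Finset.Ico_add_one_right_eq_Icc, show 2 * s - 1 + 1 = 2 * s from by omega,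
      Finset.sum_Ico_eq_sum_range]
    have h := Finset.sum_range_sub' (fun j => Ftel s (j + 1)) (2 * s - 1)
    rw [show 2 * s - 1 + 1 = 2 * s from by omega] at h
    have hcongr : ∀ j ∈ Finset.range (2 * s - 1),
        Ftel s (1 + j) - Ftel s (1 + j + 1) = Ftel s (j + 1) - Ftel s (j + 1 + 1) :=
      fun j _ => by rw [add_comm 1 j]
    rw [Finset.sum_congr rfl hcongr, h]
  rw [hsum]
  unfold Ftel
  have e1 : 2 * s + 2 - 1 = 2 * s + 1 := by omega
  have e2 : 2 * s + 2 - 2 * s = 2 := by omega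
  rw [e1, e2]
  have hpow : ((-1 : ℚ)) ^ (2 * s) = 1 := by
    rw [pow_mul]; norm_num
  rw [hpow]
  have hf1 : (Nat.factorial (2 * s + 1) : ℚ) = (2 * s + 1) * (Nat.factorial (2 * s) : ℚ) := by
    rw [Nat.factorial_succ]; push_cast; ring
  have hf2 : (Nat.factorial (2 * s + 2) : ℚ) =
      (2 * s + 2) * ((2 * s + 1) * (Nat.factorial (2 * s) : ℚ)) := by
    rw [Nat.factorial_succ]; push_cast [hf1]; ring
  rw [hf1, hf2]
  have hfs : (Nat.factorial (2 * s) : ℚ) ≠ 0 := by positivity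
  have hs' : (2 * (s:ℚ)) ≠ 0 := by
    have : (0:ℚ) < s := by exact_mod_cast hs
    positivity
  have hs2 : (2 * (s:ℚ) + 2) ≠ 0 := by positivity
  have hs1 : (2 * (s:ℚ) + 1) ≠ 0 := by positivity
  norm_num [Nat.factorial]
  field_simp
  ring
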